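/- Coarse correlated price of anarchy of the single-item γ-hybrid auction without overbidding is at most 1/(1−γ): Let γ ∈ [0,1), n ≥ 2, valuations v : Fin n → ℝ≥0, and let the tie-breaking order favor a fixed bidder i* of maximal valuation (so i* wins whenever i* bids max_i v_i against no-overbidding opponents). Let μ be a probability measure on bid profiles supported on no-overbidding profiles (b_i ≤ v_i for all i, μ-a.s.), with all utilities μ-integrable, satisfying the coarse correlated equilibrium condition: for every bidder i and every constant deviation b'_i ∈ [0, v_i], E_{b∼μ}[u_i(b)] ≥ E_{b∼μ}[u_i(b'_i, b_{−i})]. Then E_{b∼μ}[SW(b)] ≥ (1−γ)·max_i v_i. -/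

import Mathlib

open MeasureTheory
open scoped NNReal

/-- The coarse correlated price of anarchy of the single-item γ-hybrid auction without
overbidding is at most `1/(1-γ)`: in any coarse correlated equilibrium `μ` supported on
no-overbidding profiles, `E[SW] ≥ (1-γ)·max_i v_i`.  Here `w b` is the highest bidder,
with ties broken in favor of a fixed bidder `i⋆` of maximal valuation, the winner pays
`γ·b_{w b} + (1-γ)·max_{j ≠ w b} b_j`, and the CCE condition is required for all
constant no-overbidding deviations. -/
theorem cce_poa_single_item_hybrid_no_overbidding
    (γ : ℝ) (hγ0 : 0 ≤ γ) (hγ1 : γ < 1) (n : ℕ) (hn : 2 ≤ n)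
    (v : Fin n → ℝ≥0)
    (istar : Fin n) (hstar : ∀ i, v i ≤ v istar)
    (w : (Fin n → ℝ≥0) → Fin n)
    (hw : ∀ b : Fin n → ℝ≥0, ∀ i, b i ≤ b (w b))
    (htie : ∀ b, b istar = b (w b) → w b = istar)
    (u : Fin n → (Fin n → ℝ≥0) → ℝ)
    (hu : ∀ i b, u i b =
      if i = w b then
        (v (w b) : ℝ) - (γ * (b (w b) : ℝ)
          + (1 - γ) * (((Finset.univ.erase (w b)).sup b : ℝ≥0) : ℝ))
      else 0)
    (μ : Measure (Fin n → ℝ≥0)) [IsProbabilityMeasure μ]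
    (hNOB : ∀ᵐ b ∂μ, ∀ i, b i ≤ v i)
    (hIntu : ∀ i, Integrable (u i) μ)
    (hIntSW : Integrable (fun b => (v (w b) : ℝ)) μ)
    (hIntdev : ∀ i (b' : ℝ≥0), Integrable (fun b => u i (Function.update b i b')) μ)
    (hCCE : ∀ i (b' : ℝ≥0), b' ≤ v i →
      ∫ b, u i (Function.update b i b') ∂μ ≤ ∫ b, u i b ∂μ) :
    (1 - γ) * ((Finset.univ.sup v : ℝ≥0) : ℝ) ≤ ∫ b, (v (w b) : ℝ) ∂μ := by

  have hsup : (Finset.univ.sup v) = v istar :=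
    le_antisymm (Finset.sup_le fun i _ => hstar i) (Finset.le_sup (Finset.mem_univ istar))
  set c : ℝ := ((v istar : ℝ≥0) : ℝ) with hc
  have key : ∀ᵐ b ∂μ, u istar b - u istar (Function.update b istar (v istar))
      ≤ (v (w b) : ℝ) - (1 - γ) * c := by
    filter_upwards [hNOB] with b H
    set b'' : Fin n → ℝ≥0 := Function.update b istar (v istar) with hb''
    have h1 : b'' istar = v istar := Function.update_self _ _ _
    have hwin : w b'' = istar := by
      apply htie
      refine le_antisymm (hw b'' istar) ?_
      rcases eq_or_ne (w b'') istar with h | h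
      · rw [h]
      · have h2 : b'' (w b'') = b (w b'') := Function.update_of_ne h _ _
        rw [h1, h2]; exact (H _).trans (hstar _)
    have hM : (Finset.univ.erase istar).sup b'' = (Finset.univ.erase istar).sup b :=
      Finset.sup_congr rfl (fun j hj => Function.update_of_ne (Finset.ne_of_mem_erase hj) _ _)
    set M : ℝ≥0 := (Finset.univ.erase istar).sup b with hMdef
    have hudev : u istar b'' = c - (γ * c + (1 - γ) * (M : ℝ)) := by
      rw [hu istar b'', if_pos hwin.symm, hwin, hM, h1]
    have hMle : (M : ℝ) ≤ (b (w b) : ℝ) := by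
      exact_mod_cast Finset.sup_le fun j _ => hw b j
    have hbw : ((b (w b) : ℝ≥0) : ℝ) ≤ ((v (w b) : ℝ≥0) : ℝ) := by exact_mod_cast H (w b)
    have hM0 : (0 : ℝ) ≤ (M : ℝ) := (M : ℝ≥0).coe_nonneg
    have hbi0 : (0 : ℝ) ≤ (b istar : ℝ) := (b istar).coe_nonneg
    rcases eq_or_ne (w b) istar with hcase | hcase
    · have hub : u istar b = c - (γ * (b istar : ℝ) + (1 - γ) * (M : ℝ)) := by
        rw [hu istar b, if_pos hcase.symm, hcase]
      rw [hub, hudev, hcase, ← hc]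
      nlinarith [mul_nonneg hγ0 hbi0]
    · have hub : u istar b = 0 := by
        rw [hu istar b, if_neg (fun h => hcase h.symm)]
      rw [hub, hudev]
      have hvw0 : (0 : ℝ) ≤ ((v (w b) : ℝ≥0) : ℝ) := (v (w b)).coe_nonneg
      nlinarith [hMle.trans hbw]
  have hInt1 := hIntu istar
  have hInt2 := hIntdev istar (v istar)
  have hmono : ∫ b, (u istar b - u istar (Function.update b istar (v istar))) ∂μ
      ≤ ∫ b, ((v (w b) : ℝ) - (1 - γ) * c) ∂μ :=
    integral_mono_ae (hInt1.sub hInt2) (hIntSW.sub (integrable_const _)) key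
  rw [integral_sub hInt1 hInt2, integral_sub hIntSW (integrable_const _),
    integral_const] at hmono
  have hcce := hCCE istar (v istar) le_rfl
  simp only [probReal_univ, one_smul] at hmono
  rw [hsup]
  linarith
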